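/- Let f be monotone submodular normalized, w : V → ℝ with weights of all elements of a bucket B in [(1+ε)^k, (1+ε)^{k+1}), and τ' > 0. Suppose we process a sequence e₁,...,e_m of distinct elements of B, adding e_i to a growing set G (initialized to G₀) whenever d(e_i|G) ≥ τ'. If each e_i is added with probability at least 1 - 2ε (over the randomness of the sequence), then the expected marginal gain satisfies E[f(G_final) - f(G₀)] ≥ (1-2ε)·m·τ'·(1+ε)^k. -/
import Mathlib


theorem stmt18 {V : Type*} [Fintype V] [DecidableEq V]
    {Ω : Type*} [Fintype Ω] [DecidableEq Ω]
    (p : Ω → ℝ) (hp : ∀ ω, 0 ≤ p ω) (hp1 : ∑ ω, p ω = 1)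
    (f : Finset V → ℝ)
    (hmono : ∀ A B : Finset V, A ⊆ B → f A ≤ f B)
    (hsub : ∀ A B : Finset V, f A + f B ≥ f (A ∪ B) + f (A ∩ B))
    (hnorm : f ∅ = 0)
    (w : V → ℝ) (hw : ∀ v, 0 < w v)
    (ε τ' : ℝ) (hε0 : 0 < ε) (hε1 : ε < 1/10) (hτ : 0 < τ')
    (k : ℤ) (B : Finset V)
    (hwB : ∀ v ∈ B, (1 + ε) ^ k ≤ w v ∧ w v < (1 + ε) ^ (k + 1))
    (m : ℕ) (e : Fin m → Ω → V)
    (heB : ∀ i ω, e i ω ∈ B)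
    (hinj : ∀ ω, Function.Injective (fun i => e i ω))
    (G₀ : Finset V) (G : ℕ → Ω → Finset V)
    (hG0 : ∀ ω, G 0 ω = G₀)
    (hGs : ∀ ω, ∀ i : Fin m, G (i.val + 1) ω =
      if τ' ≤ (f (insert (e i ω) (G i.val ω)) - f (G i.val ω)) / w (e i ω)
      then insert (e i ω) (G i.val ω) else G i.val ω)
    (hadd : ∀ i : Fin m,
      1 - 2 * ε ≤ ∑ ω ∈ Finset.univ.filter
        (fun ω => τ' ≤ (f (insert (e i ω) (G i.val ω)) - f (G i.val ω)) / w (e i ω)), p ω) :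
    (1 - 2 * ε) * m * τ' * (1 + ε) ^ k ≤ ∑ ω, p ω * (f (G m ω) - f G₀) := by
  have h1 : (0:ℝ) < 1 + ε := by linarith
  have hpow : (0:ℝ) < (1+ε)^k := zpow_pos h1 k
  have hgain0 : ∀ ω, ∀ i : Fin m, 0 ≤ f (G (i.val+1) ω) - f (G i.val ω) := by
    intro ω i
    have h := hGs ω i
    split_ifs at h with hc
    · rw [h]; have := hmono _ _ (Finset.subset_insert (e i ω) (G i.val ω)); linarith
    · rw [h]; linarith
  have hkey : ∀ i : Fin m, (1-2*ε)*τ'*(1+ε)^k ≤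
      ∑ ω, p ω * (f (G (i.val+1) ω) - f (G i.val ω)) := by
    intro i
    have hc0 : 0 < τ' * (1+ε)^k := mul_pos hτ hpow
    calc (1-2*ε)*τ'*(1+ε)^k = (1-2*ε) * (τ' * (1+ε)^k) := by ring
      _ ≤ (∑ ω ∈ Finset.univ.filter
            (fun ω => τ' ≤ (f (insert (e i ω) (G i.val ω)) - f (G i.val ω)) / w (e i ω)), p ω)
            * (τ' * (1+ε)^k) := mul_le_mul_of_nonneg_right (hadd i) hc0.le
      _ = ∑ ω ∈ Finset.univ.filter
            (fun ω => τ' ≤ (f (insert (e i ω) (G i.val ω)) - f (G i.val ω)) / w (e i ω)),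
            p ω * (τ' * (1+ε)^k) := Finset.sum_mul _ _ _
      _ ≤ ∑ ω ∈ Finset.univ.filter
            (fun ω => τ' ≤ (f (insert (e i ω) (G i.val ω)) - f (G i.val ω)) / w (e i ω)),
            p ω * (f (G (i.val+1) ω) - f (G i.val ω)) := by
          apply Finset.sum_le_sum
          intro ω hω
          simp only [Finset.mem_filter] at hω
          have hcond := hω.2
          have hG := hGs ω i
          rw [if_pos hcond] at hG
          have hwv := (hwB _ (heB i ω)).1
          have hw' := hw (e i ω)
          have hd : τ' * w (e i ω) ≤ f (insert (e i ω) (G i.val ω)) - f (G i.val ω) :=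
            (le_div_iff₀ hw').mp hcond
          have : τ' * (1+ε)^k ≤ f (G (i.val+1) ω) - f (G i.val ω) := by
            rw [hG]
            calc τ' * (1+ε)^k ≤ τ' * w (e i ω) := by nlinarith
              _ ≤ _ := hd
          exact mul_le_mul_of_nonneg_left this (hp ω)
      _ ≤ ∑ ω, p ω * (f (G (i.val+1) ω) - f (G i.val ω)) :=
          Finset.sum_le_sum_of_subset_of_nonneg (Finset.filter_subset _ _)
            (fun ω _ _ => mul_nonneg (hp ω) (hgain0 ω i))
  have htel : ∀ ω, f (G m ω) - f G₀ = ∑ i ∈ Finset.range m, (f (G (i+1) ω) - f (G i ω)) := by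
    intro ω
    rw [Finset.sum_range_sub (fun i => f (G i ω)), hG0]
  calc (1-2*ε)*m*τ'*(1+ε)^k
      = ∑ _i ∈ Finset.range m, (1-2*ε)*τ'*(1+ε)^k := by
        rw [Finset.sum_const, Finset.card_range, nsmul_eq_mul]; ring
    _ ≤ ∑ i ∈ Finset.range m, ∑ ω, p ω * (f (G (i+1) ω) - f (G i ω)) := by
        apply Finset.sum_le_sum
        intro i hi
        exact hkey ⟨i, Finset.mem_range.mp hi⟩
    _ = ∑ ω, p ω * (f (G m ω) - f G₀) := by
        rw [Finset.sum_comm]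
        apply Finset.sum_congr rfl
        intro ω _
        rw [htel ω, Finset.mul_sum]
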